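/- Fix a positive integer r and nonnegative integers U, V. Then ∑_{A} ∑_{B} ∏_{i=1}^r (A_i + B_i + 3)! ≤ 2^(11r)·(U + V + 3)!, where A ranges over all r-tuples of nonnegative integers summing to U and B over all r-tuples of nonnegative integers summing to V. -/

import Mathlib

section Aux
open Finset Nat

private lemma ascMono {m n : ℕ} (h : m ≤ n) : ∀ k, m.ascFactorial k ≤ n.ascFactorial k
  | 0 => le_refl _
  | k+1 => by
      rw [Nat.ascFactorial_succ, Nat.ascFactorial_succ]
      exact Nat.mul_le_mul (by omega) (ascMono h k)

private lemma lemT {s t : ℕ} (h : s ≤ t) :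
    (t+3)! * (2*s+3)! ≤ (s+3)! * (s+t+3)! := by
  have h1 : (s+3)! * (s+4).ascFactorial s = (2*s+3)! := by
    have := Nat.factorial_mul_ascFactorial (s+3) s
    rw [show s+3+s = 2*s+3 by ring] at this
    simpa using this
  have h2 : (t+3)! * (t+4).ascFactorial s = (s+t+3)! := by
    have := Nat.factorial_mul_ascFactorial (t+3) s
    rw [show t+3+s = s+t+3 by ring] at this
    simpa using this
  calc (t+3)! * (2*s+3)! = (t+3)! * ((s+3)! * (s+4).ascFactorial s) := by rw [h1]
    _ = (s+3)! * ((t+3)! * (s+4).ascFactorial s) := by ring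
    _ ≤ (s+3)! * ((t+3)! * (t+4).ascFactorial s) :=
        Nat.mul_le_mul_left _ (Nat.mul_le_mul_left _ (ascMono (by omega) s))
    _ = (s+3)! * (s+t+3)! := by rw [h2]

private lemma lemH : ∀ s : ℕ, 3^s * ((s+3)!)^2 ≤ 8 * 2^s * (2*s+3)!
  | 0 => by norm_num [Nat.factorial]
  | 1 => by norm_num [Nat.factorial]
  | (s+2) => by
      have ih := lemH (s+1)
      have key : 3 * (s+5)^2 ≤ 2 * ((2*s+6) * (2*s+7)) := by nlinarith
      have e1 : ((s+2)+3)! = (s+5) * ((s+1)+3)! := rfl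
      have e2 : (2*(s+2)+3)! = (2*s+7) * ((2*s+6) * (2*(s+1)+3)!) := by
        rw [show 2*(s+2)+3 = (2*s+6)+1 from by ring, Nat.factorial_succ,
          show 2*s+6 = (2*(s+1)+3)+1 from by ring, Nat.factorial_succ]
        ring_nf
      calc 3^(s+2) * (((s+2)+3)!)^2 = (3*(s+5)^2) * (3^(s+1) * (((s+1)+3)!)^2) := by
            rw [e1]; ring
        _ ≤ (2*((2*s+6)*(2*s+7))) * (8 * 2^(s+1) * (2*(s+1)+3)!) :=
            Nat.mul_le_mul key ih
        _ = 8 * 2^(s+2) * (2*(s+2)+3)! := by rw [e2]; ring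


private def hq (m : ℕ) : ℚ := ((m+3)! : ℚ)^2 / ((2*m+3)! : ℚ)

private lemma hq_nonneg (m : ℕ) : 0 ≤ hq m := by unfold hq; positivity

private lemma hq_le (m : ℕ) : hq m ≤ 8 * (2/3)^m := by
  have hc : (3:ℚ)^m * ((m+3)! : ℚ)^2 ≤ 8 * 2^m * ((2*m+3)! : ℚ) := by
    exact_mod_cast lemH m
  rw [hq, div_le_iff₀ (by positivity)]
  rw [show (8 : ℚ) * (2/3)^m * ((2*m+3)! : ℚ) = (8 * 2^m * ((2*m+3)! : ℚ)) / 3^m by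
    rw [div_pow]; ring]
  rw [le_div_iff₀ (by positivity)]
  calc ((m+3)! : ℚ)^2 * 3^m = 3^m * ((m+3)! : ℚ)^2 := by ring
    _ ≤ _ := hc

private lemma lemC1 {s t : ℕ} (h : s ≤ t) :
    (((s+3)! : ℚ)) * ((t+3)! : ℚ) ≤ hq s * ((s+t+3)! : ℚ) := by
  have hT : ((t+3)! : ℚ) * ((2*s+3)! : ℚ) ≤ ((s+3)! : ℚ) * ((s+t+3)! : ℚ) := by
    exact_mod_cast lemT h
  rw [hq, div_mul_eq_mul_div, le_div_iff₀ (by positivity)]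
  calc ((s+3)! : ℚ) * ((t+3)! : ℚ) * ((2*s+3)! : ℚ)
      = ((s+3)! : ℚ) * (((t+3)! : ℚ) * ((2*s+3)! : ℚ)) := by ring
    _ ≤ ((s+3)! : ℚ) * (((s+3)! : ℚ) * ((s+t+3)! : ℚ)) :=
        mul_le_mul_of_nonneg_left hT (by positivity)
    _ = ((s+3)! : ℚ)^2 * ((s+t+3)! : ℚ) := by ring

private lemma lemC (s t : ℕ) :
    (((s+3)! : ℚ)) * ((t+3)! : ℚ) ≤ (hq s + hq t) * ((s+t+3)! : ℚ) := by
  have hF : (0:ℚ) ≤ ((s+t+3)! : ℚ) := by positivity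
  rcases le_total s t with h | h
  · have := lemC1 h
    nlinarith [mul_nonneg (hq_nonneg t) hF]
  · have := lemC1 h
    rw [show t+s+3 = s+t+3 by ring] at this
    nlinarith [mul_nonneg (hq_nonneg s) hF]

private lemma geo (N : ℕ) : ∑ k ∈ range N, ((2:ℚ)/3)^k ≤ 3 := by
  rw [geom_sum_eq (by norm_num)]
  rw [div_le_iff_of_neg (by norm_num)]
  have : (0:ℚ) ≤ (2/3)^N := by positivity
  linarith

private lemma sumA1 (U : ℕ) : ∑ p ∈ antidiagonal U, ((2:ℚ)/3)^p.1 ≤ 3 := by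
  rw [Finset.Nat.sum_antidiagonal_eq_sum_range_succ_mk]
  exact geo (U+1)

private lemma sumA2 (U : ℕ) : ∑ p ∈ antidiagonal U, ((2:ℚ)/3)^p.2 ≤ 3 := by
  rw [Finset.Nat.sum_antidiagonal_eq_sum_range_succ_mk]
  calc ∑ k ∈ range (U+1), ((2:ℚ)/3)^(U-k)
      = ∑ k ∈ range (U+1), ((2:ℚ)/3)^(U+1-1-k) := by norm_num
    _ = ∑ k ∈ range (U+1), ((2:ℚ)/3)^k := Finset.sum_range_reflect _ _
    _ ≤ 3 := geo (U+1)


private lemma sumHq1 (U V : ℕ) :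
    ∑ p ∈ antidiagonal U, ∑ q ∈ antidiagonal V, hq (p.1+q.1) ≤ 72 := by
  have h1 : ∑ p ∈ antidiagonal U, ∑ q ∈ antidiagonal V, hq (p.1+q.1)
      ≤ ∑ p ∈ antidiagonal U, ∑ q ∈ antidiagonal V, 8 * ((2:ℚ)/3)^p.1 * ((2:ℚ)/3)^q.1 := by
    apply Finset.sum_le_sum; intro p _
    apply Finset.sum_le_sum; intro q _
    have := hq_le (p.1+q.1)
    rw [pow_add] at this
    calc hq (p.1+q.1) ≤ 8 * (((2:ℚ)/3)^p.1 * ((2:ℚ)/3)^q.1) := this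
      _ = 8 * ((2:ℚ)/3)^p.1 * ((2:ℚ)/3)^q.1 := by ring
  have h2 : ∑ p ∈ antidiagonal U, ∑ q ∈ antidiagonal V, 8 * ((2:ℚ)/3)^p.1 * ((2:ℚ)/3)^q.1
      = 8 * ((∑ p ∈ antidiagonal U, ((2:ℚ)/3)^p.1) * (∑ q ∈ antidiagonal V, ((2:ℚ)/3)^q.1)) := by
    rw [Finset.sum_mul_sum]
    rw [Finset.mul_sum]
    apply Finset.sum_congr rfl; intro p _
    rw [Finset.mul_sum]
    apply Finset.sum_congr rfl; intro q _
    ring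
  have g1 := sumA1 U
  have g2 := sumA1 V
  have n1 : (0:ℚ) ≤ ∑ p ∈ antidiagonal U, ((2:ℚ)/3)^p.1 := by
    apply Finset.sum_nonneg; intros; positivity
  have n2 : (0:ℚ) ≤ ∑ q ∈ antidiagonal V, ((2:ℚ)/3)^q.1 := by
    apply Finset.sum_nonneg; intros; positivity
  calc ∑ p ∈ antidiagonal U, ∑ q ∈ antidiagonal V, hq (p.1+q.1) ≤ _ := h1
    _ = _ := h2
    _ ≤ 8 * (3 * 3) := by nlinarith
    _ = 72 := by norm_num

private lemma sumHq2 (U V : ℕ) :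
    ∑ p ∈ antidiagonal U, ∑ q ∈ antidiagonal V, hq (p.2+q.2) ≤ 72 := by
  have h1 : ∑ p ∈ antidiagonal U, ∑ q ∈ antidiagonal V, hq (p.2+q.2)
      ≤ ∑ p ∈ antidiagonal U, ∑ q ∈ antidiagonal V, 8 * ((2:ℚ)/3)^p.2 * ((2:ℚ)/3)^q.2 := by
    apply Finset.sum_le_sum; intro p _
    apply Finset.sum_le_sum; intro q _
    have := hq_le (p.2+q.2)
    rw [pow_add] at this
    calc hq (p.2+q.2) ≤ 8 * (((2:ℚ)/3)^p.2 * ((2:ℚ)/3)^q.2) := this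
      _ = 8 * ((2:ℚ)/3)^p.2 * ((2:ℚ)/3)^q.2 := by ring
  have h2 : ∑ p ∈ antidiagonal U, ∑ q ∈ antidiagonal V, 8 * ((2:ℚ)/3)^p.2 * ((2:ℚ)/3)^q.2
      = 8 * ((∑ p ∈ antidiagonal U, ((2:ℚ)/3)^p.2) * (∑ q ∈ antidiagonal V, ((2:ℚ)/3)^q.2)) := by
    rw [Finset.sum_mul_sum]
    rw [Finset.mul_sum]
    apply Finset.sum_congr rfl; intro p _
    rw [Finset.mul_sum]
    apply Finset.sum_congr rfl; intro q _
    ring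
  have g1 := sumA2 U
  have g2 := sumA2 V
  have n1 : (0:ℚ) ≤ ∑ p ∈ antidiagonal U, ((2:ℚ)/3)^p.2 := by
    apply Finset.sum_nonneg; intros; positivity
  have n2 : (0:ℚ) ≤ ∑ q ∈ antidiagonal V, ((2:ℚ)/3)^q.2 := by
    apply Finset.sum_nonneg; intros; positivity
  calc ∑ p ∈ antidiagonal U, ∑ q ∈ antidiagonal V, hq (p.2+q.2) ≤ _ := h1
    _ = _ := h2
    _ ≤ 8 * (3 * 3) := by nlinarith
    _ = 72 := by norm_num

private lemma lemK (U V : ℕ) :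
    ∑ p ∈ antidiagonal U, ∑ q ∈ antidiagonal V, (p.1+q.1+3)! * (p.2+q.2+3)!
      ≤ 2048 * (U+V+3)! := by
  rw [← Nat.cast_le (α := ℚ)]
  push_cast
  have hF : (0:ℚ) ≤ ((U+V+3)! : ℚ) := by positivity
  have step1 : ∑ p ∈ antidiagonal U, ∑ q ∈ antidiagonal V,
      ((p.1+q.1+3)! : ℚ) * ((p.2+q.2+3)! : ℚ)
      ≤ ∑ p ∈ antidiagonal U, ∑ q ∈ antidiagonal V,
        (hq (p.1+q.1) + hq (p.2+q.2)) * ((U+V+3)! : ℚ) := by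
    apply Finset.sum_le_sum; intro p hp
    apply Finset.sum_le_sum; intro q hq'
    rw [Finset.HasAntidiagonal.mem_antidiagonal] at hp hq'
    have := lemC (p.1+q.1) (p.2+q.2)
    rw [show (p.1+q.1) + (p.2+q.2) + 3 = U+V+3 by omega] at this
    exact this
  have step2 : ∑ p ∈ antidiagonal U, ∑ q ∈ antidiagonal V,
      (hq (p.1+q.1) + hq (p.2+q.2)) * ((U+V+3)! : ℚ)
      = ((∑ p ∈ antidiagonal U, ∑ q ∈ antidiagonal V, hq (p.1+q.1))
        + (∑ p ∈ antidiagonal U, ∑ q ∈ antidiagonal V, hq (p.2+q.2))) * ((U+V+3)! : ℚ) := by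
    rw [add_mul, Finset.sum_mul, Finset.sum_mul, ← Finset.sum_add_distrib]
    apply Finset.sum_congr rfl; intro p _
    rw [Finset.sum_mul, Finset.sum_mul, ← Finset.sum_add_distrib]
    apply Finset.sum_congr rfl; intro q _
    ring
  have h72a := sumHq1 U V
  have h72b := sumHq2 U V
  calc ∑ p ∈ antidiagonal U, ∑ q ∈ antidiagonal V,
        ((p.1+q.1+3)! : ℚ) * ((p.2+q.2+3)! : ℚ) ≤ _ := step1
    _ = _ := step2
    _ ≤ 2048 * ((U+V+3)! : ℚ) := by nlinarith


private lemma sum_adT_succ {M : Type*} [AddCommMonoid M] (r n : ℕ)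
    (f : (Fin (r+1) → ℕ) → M) :
    ∑ A ∈ Finset.Nat.antidiagonalTuple (r+1) n, f A
      = ∑ p ∈ antidiagonal n, ∑ A ∈ Finset.Nat.antidiagonalTuple r p.2,
          f (Fin.cons p.1 A) := by
  rw [Finset.sum_sigma']
  symm
  apply Finset.sum_nbij' (j := fun A => (⟨(A 0, ∑ i, Fin.tail A i), Fin.tail A⟩ :
      (_ : ℕ × ℕ) × (Fin r → ℕ)))
    (i := fun x => Fin.cons x.1.1 x.2)
  · intro x hx
    rw [Finset.mem_sigma, Finset.HasAntidiagonal.mem_antidiagonal, Finset.Nat.mem_antidiagonalTuple] at hx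
    rw [Finset.Nat.mem_antidiagonalTuple, Fin.sum_cons, hx.2, hx.1]
  · intro A hA
    rw [Finset.Nat.mem_antidiagonalTuple] at hA
    rw [Finset.mem_sigma, Finset.HasAntidiagonal.mem_antidiagonal, Finset.Nat.mem_antidiagonalTuple]
    refine ⟨?_, rfl⟩
    rw [← hA, Fin.sum_univ_succ]
    rfl
  · intro x hx
    rw [Finset.mem_sigma, Finset.HasAntidiagonal.mem_antidiagonal, Finset.Nat.mem_antidiagonalTuple] at hx
    ext
    · simp
    · simp [Fin.tail_cons, hx.2]
    · simp [Fin.tail_cons]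
  · intro A hA
    exact Fin.cons_self_tail A
  · intro x hx
    rfl

private lemma main : ∀ r U V : ℕ,
    ∑ A ∈ Finset.Nat.antidiagonalTuple r U, ∑ B ∈ Finset.Nat.antidiagonalTuple r V,
      ∏ i, (A i + B i + 3)!
      ≤ 2 ^ (11 * r) * (U + V + 3)!
  | 0, 0, 0 => by
      simp [Finset.Nat.antidiagonalTuple_zero_zero]
      exact Nat.one_le_iff_ne_zero.mpr (Nat.factorial_ne_zero _)
  | 0, 0, (V+1) => by
      simp [Finset.Nat.antidiagonalTuple_zero_zero, Finset.Nat.antidiagonalTuple_zero_succ]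
  | 0, (U+1), V => by
      simp [Finset.Nat.antidiagonalTuple_zero_succ]
  | (r+1), U, V => by
      have ih := main r
      rw [sum_adT_succ r U]
      have inner : ∀ p : ℕ × ℕ, ∀ A : Fin r → ℕ,
          ∑ B ∈ Finset.Nat.antidiagonalTuple (r+1) V,
            ∏ i, ((Fin.cons p.1 A : Fin (r+1) → ℕ) i + B i + 3)!
          = ∑ q ∈ antidiagonal V, ∑ B ∈ Finset.Nat.antidiagonalTuple r q.2,
              (p.1 + q.1 + 3)! * ∏ i, (A i + B i + 3)! := by
        intro p A
        rw [sum_adT_succ r V]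
        apply Finset.sum_congr rfl; intro q _
        apply Finset.sum_congr rfl; intro B _
        rw [Fin.prod_univ_succ]
        simp [Fin.cons_zero, Fin.cons_succ]
      calc ∑ p ∈ antidiagonal U, ∑ A ∈ Finset.Nat.antidiagonalTuple r p.2,
            ∑ B ∈ Finset.Nat.antidiagonalTuple (r+1) V,
              ∏ i, ((Fin.cons p.1 A : Fin (r+1) → ℕ) i + B i + 3)!
          = ∑ p ∈ antidiagonal U, ∑ q ∈ antidiagonal V,
              (p.1+q.1+3)! * ∑ A ∈ Finset.Nat.antidiagonalTuple r p.2,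
                ∑ B ∈ Finset.Nat.antidiagonalTuple r q.2, ∏ i, (A i + B i + 3)! := by
            apply Finset.sum_congr rfl; intro p _
            calc ∑ A ∈ Finset.Nat.antidiagonalTuple r p.2,
                  ∑ B ∈ Finset.Nat.antidiagonalTuple (r+1) V,
                    ∏ i, ((Fin.cons p.1 A : Fin (r+1) → ℕ) i + B i + 3)!
                = ∑ A ∈ Finset.Nat.antidiagonalTuple r p.2, ∑ q ∈ antidiagonal V,
                    ∑ B ∈ Finset.Nat.antidiagonalTuple r q.2,
                      (p.1+q.1+3)! * ∏ i, (A i + B i + 3)! :=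
                  Finset.sum_congr rfl (fun A _ => inner p A)
              _ = ∑ q ∈ antidiagonal V, ∑ A ∈ Finset.Nat.antidiagonalTuple r p.2,
                    ∑ B ∈ Finset.Nat.antidiagonalTuple r q.2,
                      (p.1+q.1+3)! * ∏ i, (A i + B i + 3)! := Finset.sum_comm
              _ = ∑ q ∈ antidiagonal V,
                    (p.1+q.1+3)! * ∑ A ∈ Finset.Nat.antidiagonalTuple r p.2,
                      ∑ B ∈ Finset.Nat.antidiagonalTuple r q.2, ∏ i, (A i + B i + 3)! := by
                  apply Finset.sum_congr rfl; intro q _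
                  rw [Finset.mul_sum]
                  apply Finset.sum_congr rfl; intro A _
                  rw [Finset.mul_sum]
          _ ≤ ∑ p ∈ antidiagonal U, ∑ q ∈ antidiagonal V,
              (p.1+q.1+3)! * (2 ^ (11*r) * (p.2+q.2+3)!) := by
            apply Finset.sum_le_sum; intro p _
            apply Finset.sum_le_sum; intro q _
            exact Nat.mul_le_mul_left _ (ih p.2 q.2)
          _ = 2 ^ (11*r) * ∑ p ∈ antidiagonal U, ∑ q ∈ antidiagonal V,
              (p.1+q.1+3)! * (p.2+q.2+3)! := by
            rw [Finset.mul_sum]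
            apply Finset.sum_congr rfl; intro p _
            rw [Finset.mul_sum]
            apply Finset.sum_congr rfl; intro q _
            ring
          _ ≤ 2 ^ (11*r) * (2048 * (U+V+3)!) :=
            Nat.mul_le_mul_left _ (lemK U V)
          _ = 2 ^ (11*(r+1)) * (U+V+3)! := by
            rw [show 11*(r+1) = 11*r + 11 by ring, pow_add, mul_assoc]
            norm_num

end Aux

theorem stmt_9 (r U V : ℕ) (hr : 0 < r) :
    ∑ A ∈ Finset.Nat.antidiagonalTuple r U, ∑ B ∈ Finset.Nat.antidiagonalTuple r V,
      ∏ i, Nat.factorial (A i + B i + 3)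
      ≤ 2 ^ (11 * r) * Nat.factorial (U + V + 3) := by
  exact main r U V
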